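/- For the snakeboard kinematic system on M = SE(2) × S¹ × S¹ with coordinates (x₁, x₂, θ, ψ, φ) and control vector fields X₁ = cosθ ∂_{x₁} + sinθ ∂_{x₂} − (tanφ/r) ∂_θ, X₂ = ∂_ψ, X₃ = ∂_φ, and symmetry group G = ℝ² × SO(2) acting by (a,b,β)·(x₁,x₂,θ,ψ,φ) = (x₁+a, x₂+b, θ, ψ+β, φ): the momentum map of the cotangent lifted action is J(x, λ) = (λ₁, λ₂, λ_ψ), and the distribution ℋ = 𝔽H(J⁻¹(0)) equals span{X₁, X₃}, which is a proper subspace of 𝒟 = span{X₁, X₂, X₃} complementary in TM to the tangent spaces of group orbits. -/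

import Mathlib

/-- For the snakeboard kinematic system on `M = SE(2) × S¹ × S¹` with
coordinates `q = (x₁, x₂, θ, ψ, φ)` (indices `0,…,4`), control vector fields
`X₁ = cos θ ∂_{x₁} + sin θ ∂_{x₂} − (tan φ / r) ∂_θ`, `X₂ = ∂_ψ`, `X₃ = ∂_φ`, and symmetry
group `G = ℝ² × SO(2)` acting by `(a,b,β)·(x₁,x₂,θ,ψ,φ) = (x₁+a, x₂+b, θ, ψ+β, φ)`:
the momentum map of the cotangent lifted action is `J(q, λ) = (λ₁, λ₂, λ_ψ)` (pairing of
`λ` with the generators `∂_{x₁}, ∂_{x₂}, ∂_ψ`), and the distribution `ℋ = 𝔽H(J⁻¹(0))`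
equals `span{X₁, X₃}`, a proper subspace of `𝒟 = span{X₁, X₂, X₃}` that is complementary
in `T_qM` to the tangent space of the group orbit (at a point where `tan φ ≠ 0`).

`H` is the snakeboard optimal Hamiltonian and `FH` its fiber derivative, characterized by
`⟨β, 𝔽H(λ)⟩ = d/dε|₀ H(q, λ + εβ)`. -/
theorem snakeboard_horizontal_distribution
    (r : ℝ) (hr : r ≠ 0)
    (q : Fin 5 → ℝ) (hq : Real.tan (q 4) ≠ 0)
    (H : (Fin 5 → ℝ) → (Fin 5 → ℝ) → ℝ)
    (hH : ∀ p lam : Fin 5 → ℝ,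
      H p lam = (1/2) * ((lam 0 * Real.cos (p 2) + lam 1 * Real.sin (p 2)
        - lam 2 * Real.tan (p 4) / r)^2 + (lam 3)^2 + (lam 4)^2))
    (FH : (Fin 5 → ℝ) → (Fin 5 → ℝ) → (Fin 5 → ℝ))
    (hFH : ∀ p lam w : Fin 5 → ℝ,
      (∑ i, w i * FH p lam i) = deriv (fun ε : ℝ => H p (lam + ε • w)) 0)
    (X1 X2 X3 : (Fin 5 → ℝ) → Fin 5 → ℝ)
    (hX1 : ∀ p, X1 p = ![Real.cos (p 2), Real.sin (p 2), -Real.tan (p 4) / r, 0, 0])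
    (hX2 : ∀ p, X2 p = ![0, 0, 0, 1, 0])
    (hX3 : ∀ p, X3 p = ![0, 0, 0, 0, 1]) :
    -- the momentum map is J(q, λ) = (λ₁, λ₂, λ_ψ): pairing with the generators
    (∀ (lam : Fin 5 → ℝ) (a b β : ℝ),
      (∑ i, lam i * (a • (![1,0,0,0,0] : Fin 5 → ℝ)
          + b • (![0,1,0,0,0] : Fin 5 → ℝ) + β • (![0,0,0,1,0] : Fin 5 → ℝ)) i)
        = a * lam 0 + b * lam 1 + β * lam 3) ∧
    -- ℋ = 𝔽H(J⁻¹(0)) = span{X₁, X₃}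
    ({v : Fin 5 → ℝ | ∃ lam : Fin 5 → ℝ,
        lam 0 = 0 ∧ lam 1 = 0 ∧ lam 3 = 0 ∧ v = FH q lam}
      = ↑(Submodule.span ℝ ({X1 q, X3 q} : Set (Fin 5 → ℝ)))) ∧
    -- a proper subspace of 𝒟 = span{X₁, X₂, X₃}
    (Submodule.span ℝ ({X1 q, X3 q} : Set (Fin 5 → ℝ))
      < Submodule.span ℝ ({X1 q, X2 q, X3 q} : Set (Fin 5 → ℝ))) ∧
    -- complementary to the tangent space of the group orbit
    IsCompl (Submodule.span ℝ ({X1 q, X3 q} : Set (Fin 5 → ℝ)))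
      (Submodule.span ℝ
        ({![1,0,0,0,0], ![0,1,0,0,0], ![0,0,0,1,0]} : Set (Fin 5 → ℝ))) := by
  set c := Real.cos (q 2) with hc
  set s := Real.sin (q 2) with hs
  set t := Real.tan (q 4) with ht
  -- key: value of FH via the derivative characterization
  have key : ∀ lam w : Fin 5 → ℝ,
      (∑ i, w i * FH q lam i)
        = (lam 0 * c + lam 1 * s - lam 2 * t / r) * (w 0 * c + w 1 * s - w 2 * t / r)
          + lam 3 * w 3 + lam 4 * w 4 := by
    intro lam w
    rw [hFH q lam w]
    have hfun : (fun ε : ℝ => H q (lam + ε • w))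
        = fun ε : ℝ => (1/2) * (((lam 0 + ε * w 0) * c + (lam 1 + ε * w 1) * s
            - (lam 2 + ε * w 2) * t / r)^2 + (lam 3 + ε * w 3)^2 + (lam 4 + ε * w 4)^2) := by
      funext ε
      rw [hH]
      simp [Pi.add_apply, Pi.smul_apply, smul_eq_mul, ← hc, ← hs, ← ht]
    rw [hfun]
    have hA : ∀ a b : ℝ, HasDerivAt (fun ε : ℝ => a + ε * b) b 0 := fun a b => by
      simpa using ((hasDerivAt_id (0:ℝ)).mul_const b).const_add a
    have h1 : HasDerivAt (fun ε : ℝ => (lam 0 + ε * w 0) * c + (lam 1 + ε * w 1) * s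
        - (lam 2 + ε * w 2) * t / r)
        (w 0 * c + w 1 * s - w 2 * t / r) 0 := by
      have := (((hA (lam 0) (w 0)).mul_const c).add ((hA (lam 1) (w 1)).mul_const s)).sub
        (((hA (lam 2) (w 2)).mul_const t).div_const r)
      exact this
    have h := ((h1.pow 2).add ((hA (lam 3) (w 3)).pow 2)).add
      ((hA (lam 4) (w 4)).pow 2)
    erw [(h.const_mul (1/2 : ℝ)).deriv]
    ring
  -- explicit formula for FH q lam
  have hFHfun : ∀ lam : Fin 5 → ℝ, FH q lam
      = fun j => (lam 0 * c + lam 1 * s - lam 2 * t / r) * X1 q j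
          + lam 3 * X2 q j + lam 4 * X3 q j := by
    intro lam
    funext j
    have hk := key lam (Pi.single j 1)
    simp only [Pi.single_apply, ite_mul, one_mul, zero_mul, Finset.sum_ite_eq',
      Finset.mem_univ, if_true] at hk
    rw [hk]
    fin_cases j <;> simp [hX1, hX2, hX3, Pi.single_apply, ← hc, ← hs, ← ht] <;> try ring
  -- name the generators
  set e0 : Fin 5 → ℝ := ![1,0,0,0,0] with he0
  set e1 : Fin 5 → ℝ := ![0,1,0,0,0] with he1
  set e3 : Fin 5 → ℝ := ![0,0,0,1,0] with he3
  refine ⟨?_, ?_, ?_, ?_⟩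
  · -- momentum map
    intro lam a b β
    simp [Fin.sum_univ_five, he0, he1, he3]
    ring
  · -- ℋ = span{X1, X3}
    ext v
    simp only [Set.mem_setOf_eq, SetLike.mem_coe, Submodule.mem_span_pair]
    constructor
    · rintro ⟨lam, h0, h1, h3, rfl⟩
      refine ⟨-(lam 2) * t / r, lam 4, ?_⟩
      rw [hFHfun]
      funext j
      simp only [Pi.add_apply, Pi.smul_apply, smul_eq_mul, h0, h1, h3]
      ring
    · rintro ⟨a, b, rfl⟩
      refine ⟨![0, 0, -a * r / t, 0, b], by simp, by simp, by simp, ?_⟩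
      rw [hFHfun]
      funext j
      simp only [Pi.add_apply, Pi.smul_apply, smul_eq_mul, Matrix.cons_val_zero,
        Matrix.cons_val_one, Matrix.head_cons]
      have h2 : (![0, 0, -a * r / t, 0, b] : Fin 5 → ℝ) 2 = -a * r / t := by simp
      have h3 : (![0, 0, -a * r / t, 0, b] : Fin 5 → ℝ) 3 = 0 := by simp
      have h4 : (![0, 0, -a * r / t, 0, b] : Fin 5 → ℝ) 4 = b := by simp
      rw [h2, h3, h4]
      field_simp
      ring
  · -- proper inclusion
    refine lt_of_le_of_ne (Submodule.span_mono ?_) ?_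
    · intro x hx
      rcases hx with h | h
      · exact Or.inl h
      · exact Or.inr (Or.inr h)
    · intro hEq
      have hX2mem : X2 q ∈ Submodule.span ℝ ({X1 q, X3 q} : Set (Fin 5 → ℝ)) := by
        rw [hEq]
        exact Submodule.subset_span (Or.inr (Or.inl rfl))
      rw [Submodule.mem_span_pair] at hX2mem
      obtain ⟨a, b, hab⟩ := hX2mem
      have h3 := congrFun hab 3
      simp [hX1, hX2, hX3, he3, Pi.add_apply, Pi.smul_apply] at h3
  · -- complementarity
    constructor
    · rw [Submodule.disjoint_def]
      intro x hx1 hx2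
      rw [Submodule.mem_span_pair] at hx1
      obtain ⟨a, b, hab⟩ := hx1
      rw [Submodule.mem_span_insert] at hx2
      obtain ⟨p, z, hz, rfl⟩ := hx2
      rw [Submodule.mem_span_insert] at hz
      obtain ⟨p', z', hz', rfl⟩ := hz
      rw [Submodule.mem_span_singleton] at hz'
      obtain ⟨p'', rfl⟩ := hz'
      have h2 := congrFun hab 2
      have h4 := congrFun hab 4
      simp only [Pi.add_apply, Pi.smul_apply, smul_eq_mul, hX1, hX3, he0, he1, he3] at h2 h4
      simp at h2 h4
      have ha : a = 0 := by
        rcases h2 with h | h | h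
        · exact h
        · exact absurd h (by rw [ht] at hq; exact hq)
        · exact absurd h hr
      rw [← hab, ha, h4]
      simp
    · rw [codisjoint_iff, ← Submodule.span_union, eq_top_iff]
      intro v _
      have hv : v = (v 0 + v 2 * r * c / t) • e0 + (v 1 + v 2 * r * s / t) • e1
          + (-(v 2) * r / t) • X1 q + v 3 • e3 + v 4 • X3 q := by
        funext j
        fin_cases j <;>
          simp [he0, he1, he3, hX1, hX3, Pi.add_apply, Pi.smul_apply] <;>
          field_simp <;> ring
      rw [hv]
      have mem : ∀ u ∈ ({X1 q, X3 q} ∪ {e0, e1, e3} : Set (Fin 5 → ℝ)),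
          u ∈ Submodule.span ℝ ({X1 q, X3 q} ∪ {e0, e1, e3} : Set (Fin 5 → ℝ)) :=
        fun u hu => Submodule.subset_span hu
      refine Submodule.add_mem _ (Submodule.add_mem _ (Submodule.add_mem _
        (Submodule.add_mem _ ?_ ?_) ?_) ?_) ?_
      · exact Submodule.smul_mem _ _ (mem _ (by right; left; rfl))
      · exact Submodule.smul_mem _ _ (mem _ (by right; right; left; rfl))
      · exact Submodule.smul_mem _ _ (mem _ (by left; left; rfl))
      · exact Submodule.smul_mem _ _ (mem _ (by right; right; right; rfl))
      · exact Submodule.smul_mem _ _ (mem _ (by left; right; rfl))
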